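/- Let s(x,y,z) = u(x,z) + v(y,z) with u, v C¹, where for each fixed x, y every maximizer of z ↦ u(x,z) + v(y,z) lies in the interior of Z. If z ↦ D_x u(x,z) is injective for each x, and y ↦ D_z v(y,z) is injective for each z, then s is twisted on z-trivial splitting sets: if S_x is a z-trivial splitting set at x and (y₀,z₀), (y₁,z₁) ∈ S_x satisfy D_x s(x,y₀,z₀) = D_x s(x,y₁,z₁), then (y₀,z₀) = (y₁,z₁). -/

import Mathlib

/-- strictly hedonic surpluses `s(x,y,z)=u(x,z)+v(y,z)` with interior maximizers
and the two twist conditions are twisted on z-trivial splitting sets. -/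
theorem stmt_11 {nx ny nz : ℕ}
    (Z : Set (EuclideanSpace ℝ (Fin nz)))
    (u : EuclideanSpace ℝ (Fin nx) → EuclideanSpace ℝ (Fin nz) → ℝ)
    (v : EuclideanSpace ℝ (Fin ny) → EuclideanSpace ℝ (Fin nz) → ℝ)
    (hu : ContDiff ℝ 1 (fun w : EuclideanSpace ℝ (Fin nx) × EuclideanSpace ℝ (Fin nz) => u w.1 w.2))
    (hv : ContDiff ℝ 1 (fun w : EuclideanSpace ℝ (Fin ny) × EuclideanSpace ℝ (Fin nz) => v w.1 w.2))
    -- every maximizer over Z of z ↦ u(x,z)+v(y,z) lies in the interior of Z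
    (hmax : ∀ (x : EuclideanSpace ℝ (Fin nx)) (y : EuclideanSpace ℝ (Fin ny)),
      ∀ z ∈ Z, (∀ z' ∈ Z, u x z' + v y z' ≤ u x z + v y z) → z ∈ interior Z)
    -- u is x-z twisted
    (hutwist : ∀ x : EuclideanSpace ℝ (Fin nx),
      Set.InjOn (fun z => fderiv ℝ (fun x' => u x' z) x) Z)
    -- v is z-y twisted
    (hvtwist : ∀ z : EuclideanSpace ℝ (Fin nz),
      Function.Injective (fun y => fderiv ℝ (fun z' => v y z') z)) :
    -- twist on z-trivial splitting sets for s(x,y,z) = u(x,z) + v(y,z), goods restricted to Z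
    ∀ (x : EuclideanSpace ℝ (Fin nx))
      (S : Set (EuclideanSpace ℝ (Fin ny) × EuclideanSpace ℝ (Fin nz)))
      (V : EuclideanSpace ℝ (Fin ny) → ℝ),
      (∀ p ∈ S, p.2 ∈ Z) →
      (∀ (y : EuclideanSpace ℝ (Fin ny)), ∀ z ∈ Z, u x z + v y z ≤ V y) →
      (∀ p ∈ S, u x p.2 + v p.1 p.2 = V p.1) →
      ∀ p ∈ S, ∀ q ∈ S,
        fderiv ℝ (fun x' => u x' p.2 + v p.1 p.2) x
          = fderiv ℝ (fun x' => u x' q.2 + v q.1 q.2) x → p = q := by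
  intro x S V hSZ hub heq p hp q hq hd
  have hud : Differentiable ℝ (fun w : EuclideanSpace ℝ (Fin nx) × EuclideanSpace ℝ (Fin nz) => u w.1 w.2) :=
    hu.differentiable one_ne_zero
  have hvd : Differentiable ℝ (fun w : EuclideanSpace ℝ (Fin ny) × EuclideanSpace ℝ (Fin nz) => v w.1 w.2) :=
    hv.differentiable one_ne_zero
  have huz : Differentiable ℝ (fun z' => u x z') := by
    intro z'
    exact (hud (x, z')).comp z' (DifferentiableAt.prodMk (differentiableAt_const x) differentiableAt_id)
  have hvz : ∀ y : EuclideanSpace ℝ (Fin ny), Differentiable ℝ (fun z' => v y z') := by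
    intro y z'
    exact (hvd (y, z')).comp z' (DifferentiableAt.prodMk (differentiableAt_const y) differentiableAt_id)
  -- simplify the derivative hypothesis: the v-terms are constants
  have hd' : fderiv ℝ (fun x' => u x' p.2) x = fderiv ℝ (fun x' => u x' q.2) x := by
    have h1 := fderiv_add_const (𝕜 := ℝ) (f := fun x' => u x' p.2) (x := x) (c := v p.1 p.2)
    have h2 := fderiv_add_const (𝕜 := ℝ) (f := fun x' => u x' q.2) (x := x) (c := v q.1 q.2)
    rw [h1, h2] at hd
    exact hd
  -- first twist: same z
  have hz : p.2 = q.2 := hutwist x (hSZ p hp) (hSZ q hq) hd'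
  -- first-order condition at a point of the splitting set
  have foc : ∀ r ∈ S, fderiv ℝ (fun z' => v r.1 z') r.2 = - fderiv ℝ (fun z' => u x z') r.2 := by
    intro r hr
    have hrZ := hSZ r hr
    have hmaxr : ∀ z' ∈ Z, u x z' + v r.1 z' ≤ u x r.2 + v r.1 r.2 := by
      intro z' hz'
      calc u x z' + v r.1 z' ≤ V r.1 := hub r.1 z' hz'
        _ = u x r.2 + v r.1 r.2 := (heq r hr).symm
    have hint : r.2 ∈ interior Z := hmax x r.1 r.2 hrZ hmaxr
    have hloc : IsLocalMax (fun z' => u x z' + v r.1 z') r.2 := by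
      filter_upwards [isOpen_interior.mem_nhds hint] with z' hz'
      exact hmaxr z' (interior_subset hz')
    have hfz : fderiv ℝ (fun z' => u x z' + v r.1 z') r.2 = 0 :=
      hloc.fderiv_eq_zero
    rw [fderiv_fun_add (huz r.2) ((hvz r.1) r.2)] at hfz
    linear_combination (norm := abel) hfz
  have hv1 : fderiv ℝ (fun z' => v p.1 z') p.2 = fderiv ℝ (fun z' => v q.1 z') p.2 := by
    rw [foc p hp, hz, foc q hq]
  have hy : p.1 = q.1 := hvtwist p.2 hv1
  exact Prod.ext hy hz
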